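/- Let p be a real polynomial of degree d, a < b, and suppose max_{x,y ∈ [a,b]} |p(x) - p(y)| ≥ H. Let ε ≤ 1/(100 d²) and a' := a + ε(b-a). Then max_{x,y ∈ [a',b]} |p(x) - p(y)| ≥ H/2. -/

import Mathlib

open Polynomial Real Set

lemma natDegree_T_le (n : ℕ) : (Polynomial.Chebyshev.T ℝ (n : ℤ)).natDegree ≤ n := by
  induction n using Nat.strong_induction_on with
  | _ n ih =>
    match n with
    | 0 => simp [Polynomial.Chebyshev.T_zero]
    | 1 => simp [Polynomial.Chebyshev.T_one]
    | (m+2) =>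
      have h : ((m:ℤ) + 2) = ((m+2 : ℕ) : ℤ) := by push_cast; ring
      have hrec := Polynomial.Chebyshev.T_add_two ℝ (m : ℤ)
      rw [h] at hrec
      rw [hrec]
      have h1 : ((m:ℤ) + 1) = ((m+1 : ℕ) : ℤ) := by push_cast; ring
      rw [h1]
      refine (Polynomial.natDegree_sub_le _ _).trans ?_
      have h2 : (2 * X * Polynomial.Chebyshev.T ℝ ((m+1 : ℕ) : ℤ)).natDegree ≤ m + 2 := by
        refine (Polynomial.natDegree_mul_le).trans ?_
        have h3 : (2 * X : ℝ[X]).natDegree ≤ 1 := by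
          refine (Polynomial.natDegree_mul_le).trans ?_
          simp
        have := ih (m+1) (by omega)
        omega
      have h4 := ih m (by omega)
      simp only [max_le_iff]
      omega

lemma T_real_cosh (n : ℤ) (t : ℝ) :
    (Polynomial.Chebyshev.T ℝ n).eval (Real.cosh t) = Real.cosh (n * t) := by
  have h := Polynomial.Chebyshev.T_complex_cos ((t : ℂ) * Complex.I) n
  rw [Complex.cos_mul_I] at h
  have h2 : (n : ℂ) * ((t : ℂ) * Complex.I) = (((n : ℝ) * t : ℝ) : ℂ) * Complex.I := by
    push_cast; ring
  rw [h2, Complex.cos_mul_I] at h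
  apply Complex.ofReal_injective
  rw [Polynomial.Chebyshev.complex_ofReal_eval_T, Complex.ofReal_cosh, h, Complex.ofReal_cosh]

lemma exists_cosh {x : ℝ} (hx : 1 ≤ x) : ∃ t, 0 ≤ t ∧ Real.cosh t = x := by
  have hsub := intermediate_value_Icc (by linarith : (0:ℝ) ≤ 2 * x)
    Real.continuous_cosh.continuousOn
  have hx2 : x ∈ Icc (Real.cosh 0) (Real.cosh (2 * x)) := by
    constructor
    · rw [Real.cosh_zero]; exact hx
    · have h1 : 2 * x ≤ Real.sinh (2 * x) := Real.self_le_sinh_iff.2 (by linarith)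
      have h2 := Real.sinh_lt_cosh (2 * x)
      linarith
  obtain ⟨t, ht, htc⟩ := hsub hx2
  exact ⟨t, ht.1, htc⟩

lemma growth_lemma (n : ℕ) (hn : 1 ≤ n) (q : ℝ[X]) (hdeg : q.natDegree ≤ n)
    (hb : ∀ x ∈ Set.Icc (-1:ℝ) 1, |q.eval x| ≤ 1) (x₀ : ℝ) (hx : 1 ≤ x₀) :
    |q.eval x₀| ≤ (Polynomial.Chebyshev.T ℝ (n : ℤ)).eval x₀ := by
  obtain ⟨t, ht0, htc⟩ := exists_cosh hx
  have hτ : (Polynomial.Chebyshev.T ℝ (n : ℤ)).eval x₀ = Real.cosh (n * t) := by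
    rw [← htc, T_real_cosh]; push_cast; ring_nf
  have hτ1 : 1 ≤ (Polynomial.Chebyshev.T ℝ (n : ℤ)).eval x₀ := by
    rw [hτ]; exact Real.one_le_cosh _
  rcases eq_or_lt_of_le hx with heq | hx1
  · have : |q.eval x₀| ≤ 1 := hb x₀ ⟨by linarith [heq], le_of_eq heq.symm⟩
    linarith
  by_contra hcon
  push_neg at hcon
  set τ := (Polynomial.Chebyshev.T ℝ (n : ℤ)).eval x₀ with hτdef
  have hτpos : 0 < τ := by linarith
  set l := q.eval x₀ / τ with hl
  have habs : 1 < |l| := by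
    rw [hl, abs_div, abs_of_pos hτpos]
    exact (one_lt_div hτpos).2 hcon
  set h : ℝ[X] := Polynomial.C l * Polynomial.Chebyshev.T ℝ (n : ℤ) - q with hh
  have hnpos : (0:ℝ) < n := by exact_mod_cast hn
  have hhx₀ : h.eval x₀ = 0 := by
    simp only [hh, Polynomial.eval_sub, Polynomial.eval_mul, Polynomial.eval_C, ← hτdef, hl]
    field_simp
    ring
  -- the points y k = cos (k π / n)
  set y : ℕ → ℝ := fun k => Real.cos (k * π / n) with hy
  have hymem : ∀ k : ℕ, k ≤ n → (k * π / n : ℝ) ∈ Icc 0 π := by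
    intro k hk
    constructor
    · positivity
    · rw [div_le_iff₀ hnpos]
      have : (k:ℝ) ≤ n := by exact_mod_cast hk
      nlinarith [Real.pi_pos]
  have hy_anti : ∀ k l : ℕ, k ≤ l → l ≤ n → y l ≤ y k := by
    intro k l hkl hln
    have h1 := hymem k (hkl.trans hln)
    have h2 := hymem l hln
    apply Real.cos_le_cos_of_nonneg_of_le_pi h1.1 h2.2
    have : (k:ℝ) ≤ l := by exact_mod_cast hkl
    have hkl' : (k:ℝ) ≤ (l:ℝ) := by exact_mod_cast hkl
    gcongr
  have hyval : ∀ k : ℕ, (Polynomial.Chebyshev.T ℝ (n : ℤ)).eval (y k) = (-1)^k := by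
    intro k
    rw [hy]
    simp only
    rw [Polynomial.Chebyshev.T_real_cos]
    have : ((n : ℤ) : ℝ) * (k * π / n) = k * π := by
      push_cast; field_simp
    rw [this]
    have := Real.cos_add_nat_mul_pi 0 k
    simpa using this
  have hymem' : ∀ k : ℕ, y k ∈ Icc (-1:ℝ) 1 :=
    fun k => ⟨Real.neg_one_le_cos _, Real.cos_le_one _⟩
  have hevalh : ∀ k : ℕ, h.eval (y k) = l * (-1)^k - q.eval (y k) := by
    intro k
    simp [hh, hyval k]
  -- sign alternation
  have hS : ∀ k : ℕ, k < n → h.eval (y (k+1)) * h.eval (y k) < 0 := by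
    intro k hk
    have e0 := abs_le.mp (hb _ (hymem' k))
    have e1 := abs_le.mp (hb _ (hymem' (k+1)))
    rw [hevalh k, hevalh (k+1)]
    rcases lt_abs.mp habs with hl1 | hl1 <;>
      rcases Nat.even_or_odd k with hk2 | hk2
    · rw [hk2.neg_one_pow, (hk2.add_one).neg_one_pow]
      nlinarith
    · rw [hk2.neg_one_pow, (Odd.add_one hk2).neg_one_pow]
      nlinarith
    · rw [hk2.neg_one_pow, (hk2.add_one).neg_one_pow]
      nlinarith
    · rw [hk2.neg_one_pow, (Odd.add_one hk2).neg_one_pow]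
      nlinarith
  -- roots strictly between consecutive points
  have hroot : ∀ k : Fin n, ∃ z, z ∈ Ioo (y (k+1)) (y k) ∧ h.eval z = 0 := by
    intro ⟨k, hk⟩
    simp only
    have hle : y (k+1) ≤ y k := hy_anti k (k+1) (by omega) (by omega)
    have hprod := hS k hk
    have hcont : ContinuousOn (fun x => h.eval x) (Icc (y (k+1)) (y k)) :=
      (Polynomial.continuous h).continuousOn
    have hne0 : h.eval (y (k+1)) ≠ 0 := by
      intro h0; rw [h0] at hprod; simp at hprod
    have hne1 : h.eval (y k) ≠ 0 := by
      intro h0; rw [h0] at hprod; simp at hprod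
    rcases mul_neg_iff.mp hprod with ⟨hpos, hneg⟩ | ⟨hneg, hpos⟩
    · obtain ⟨z, hz, hz0⟩ := intermediate_value_Icc' hle hcont ⟨hneg.le, hpos.le⟩
      have hz0' : h.eval z = 0 := hz0
      refine ⟨z, ⟨?_, ?_⟩, hz0'⟩
      · refine lt_of_le_of_ne hz.1 (fun e => hne0 ?_); rw [e]; exact hz0'
      · refine lt_of_le_of_ne hz.2 (fun e => hne1 ?_); rw [← e]; exact hz0'
    · obtain ⟨z, hz, hz0⟩ := intermediate_value_Icc hle hcont ⟨hneg.le, hpos.le⟩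
      have hz0' : h.eval z = 0 := hz0
      refine ⟨z, ⟨?_, ?_⟩, hz0'⟩
      · refine lt_of_le_of_ne hz.1 (fun e => hne0 ?_); rw [e]; exact hz0'
      · refine lt_of_le_of_ne hz.2 (fun e => hne1 ?_); rw [← e]; exact hz0'
  choose z hzmem hzval using hroot
  have hy0 : y 0 = 1 := by simp [hy]
  have hzlt : ∀ k : Fin n, z k < x₀ := by
    intro k
    have h1 : z k < y (k:ℕ) := (hzmem k).2
    have h2 : y (k:ℕ) ≤ y 0 := hy_anti 0 k (Nat.zero_le _) (le_of_lt k.2)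
    rw [hy0] at h2
    linarith
  have hzmono : ∀ i j : Fin n, (i:ℕ) < (j:ℕ) → z j < z i := by
    intro i j hij
    have h1 : z j < y (j:ℕ) := (hzmem j).2
    have h2 : y (j:ℕ) ≤ y ((i:ℕ)+1) := hy_anti _ _ (by omega) (le_of_lt j.2)
    have h3 : y ((i:ℕ)+1) < z i := (hzmem i).1
    linarith
  set f : Fin (n+1) → ℝ := fun i => if hi : (i:ℕ) < n then z ⟨i, hi⟩ else x₀ with hf
  have hfinj : Function.Injective f := by
    intro i j hij
    simp only [hf] at hij
    by_cases hi : (i:ℕ) < n <;> by_cases hj : (j:ℕ) < n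
    · rw [dif_pos hi, dif_pos hj] at hij
      rcases lt_trichotomy ((i:ℕ)) ((j:ℕ)) with hlt | heq | hlt
      · exact absurd hij (ne_of_gt (hzmono ⟨i,hi⟩ ⟨j,hj⟩ hlt))
      · exact Fin.ext heq
      · exact absurd hij (ne_of_lt (hzmono ⟨j,hj⟩ ⟨i,hi⟩ hlt))
    · rw [dif_pos hi, dif_neg hj] at hij
      exact absurd hij (ne_of_lt (hzlt ⟨i,hi⟩))
    · rw [dif_neg hi, dif_pos hj] at hij
      exact absurd hij (ne_of_gt (hzlt ⟨j,hj⟩))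
    · apply Fin.ext; omega
  have heval : ∀ i, h.eval (f i) = 0 := by
    intro i
    by_cases hi : (i:ℕ) < n
    · simp only [hf, dif_pos hi]; exact hzval ⟨i, hi⟩
    · simp only [hf, dif_neg hi]; exact hhx₀
  have hdegh : h.natDegree ≤ n := by
    refine (Polynomial.natDegree_sub_le _ _).trans ?_
    have h1 : (Polynomial.C l * Polynomial.Chebyshev.T ℝ (n:ℤ)).natDegree ≤ n := by
      refine Polynomial.natDegree_mul_le.trans ?_
      simpa using natDegree_T_le n
    simp only [max_le_iff]
    exact ⟨h1, hdeg⟩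
  have hzero : h = 0 :=
    Polynomial.eq_zero_of_natDegree_lt_card_of_eval_eq_zero h hfinj heval
      (by simpa using Nat.lt_succ_of_le hdegh)
  have hfalse := hS 0 hn
  rw [hzero] at hfalse
  simp at hfalse

lemma T_at_bound (n : ℕ) (hn : 1 ≤ n) (x₀ : ℝ) (h1 : 1 ≤ x₀)
    (h2 : x₀ ≤ 1 + 1 / (18 * (n:ℝ)^2)) :
    (Polynomial.Chebyshev.T ℝ (n : ℤ)).eval x₀ ≤ 2 := by
  obtain ⟨t, ht0, htc⟩ := exists_cosh h1
  have hn1 : (1:ℝ) ≤ n := by exact_mod_cast hn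
  have hval : (Polynomial.Chebyshev.T ℝ (n : ℤ)).eval x₀ = Real.cosh (n * t) := by
    rw [← htc, T_real_cosh]; push_cast; ring_nf
  -- t^2 / 2 ≤ cosh t - 1
  have hsinh : t / 2 ≤ Real.sinh (t / 2) := Real.self_le_sinh_iff.2 (by linarith)
  have hcosh2 : Real.cosh t = 1 + 2 * Real.sinh (t/2) ^ 2 := by
    have := Real.cosh_two_mul (t/2)
    have h3 := Real.cosh_sq (t/2)
    rw [show 2 * (t/2) = t by ring] at this
    rw [this, h3]; ring
  have hsq : t ^ 2 / 2 ≤ Real.cosh t - 1 := by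
    rw [hcosh2]
    have : (t/2)^2 ≤ Real.sinh (t/2)^2 := by
      apply sq_le_sq'
      · nlinarith
      · exact hsinh
    nlinarith
  have ht2 : t ^ 2 ≤ 1 / (9 * (n:ℝ)^2) := by
    have : Real.cosh t - 1 ≤ 1 / (18 * (n:ℝ)^2) := by rw [htc]; linarith
    have h9 : (0:ℝ) < 9 * (n:ℝ)^2 := by positivity
    rw [le_div_iff₀ h9]
    have h18 : (0:ℝ) < 18 * (n:ℝ)^2 := by positivity
    rw [le_div_iff₀ h18] at this
    nlinarith
  have hnt : (n:ℝ) * t ≤ 1 / 3 := by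
    have hsq2 : ((n:ℝ) * t) ^ 2 ≤ 1 / 9 := by
      have : ((n:ℝ)*t)^2 = (n:ℝ)^2 * t^2 := by ring
      rw [this]
      calc (n:ℝ)^2 * t^2 ≤ (n:ℝ)^2 * (1 / (9 * (n:ℝ)^2)) := by
            apply mul_le_mul_of_nonneg_left ht2 (by positivity)
        _ = 1 / 9 := by field_simp
    nlinarith [mul_nonneg (le_of_lt (by positivity : (0:ℝ) < (n:ℝ))) ht0]
  have hexp : Real.cosh ((n:ℝ) * t) ≤ Real.exp ((n:ℝ) * t) := by
    rw [Real.cosh_eq]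
    have : Real.exp (-((n:ℝ)*t)) ≤ Real.exp ((n:ℝ)*t) := by
      apply Real.exp_le_exp.2
      have : 0 ≤ (n:ℝ) * t := by positivity
      linarith
    linarith
  have hexp2 : Real.exp ((n:ℝ) * t) ≤ Real.exp (1/3) := Real.exp_le_exp.2 hnt
  have hexp3 : Real.exp (1/3 : ℝ) < 2 := by
    have hcube : Real.exp (1/3 : ℝ) ^ 3 = Real.exp 1 := by
      rw [← Real.exp_nat_mul]; norm_num
    nlinarith [Real.exp_one_lt_d9, Real.exp_pos (1/3 : ℝ), hcube,
      sq_nonneg (Real.exp (1/3 : ℝ))]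
  rw [hval]
  push_cast
  linarith

/-- Shrinking the domain slightly can only modestly shrink the range. -/
theorem range_shrink (p : Polynomial ℝ) (d : ℕ) (hd : p.natDegree = d) (hd1 : 1 ≤ d)
    (a b H ε : ℝ) (hab : a < b) (hH : 0 ≤ H) (hε : 0 < ε) (hε' : ε ≤ 1 / (100 * (d : ℝ) ^ 2))
    (hrange : ∃ x ∈ Set.Icc a b, ∃ y ∈ Set.Icc a b, H ≤ |p.eval x - p.eval y|) :
    ∃ x ∈ Set.Icc (a + ε * (b - a)) b, ∃ y ∈ Set.Icc (a + ε * (b - a)) b,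
      H / 2 ≤ |p.eval x - p.eval y| := by
  obtain ⟨x, hx, y, hy, hxy⟩ := hrange
  set A := a + ε * (b - a) with hAdef
  have hd2 : (1:ℝ) ≤ (d:ℝ) := by exact_mod_cast hd1
  have hd100 : (0:ℝ) < 100 * (d:ℝ)^2 := by positivity
  have hεd : ε * (100 * (d:ℝ)^2) ≤ 1 := by
    rw [le_div_iff₀ hd100] at hε'; exact hε'
  have hε100 : ε ≤ 1/100 := by nlinarith
  have hB : (0:ℝ) < b - a := by linarith
  have haA : a < A := by nlinarith
  have hAb : A < b := by nlinarith
  -- extrema on [A, b]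
  have hcont : ContinuousOn (fun w => p.eval w) (Set.Icc A b) :=
    (Polynomial.continuous p).continuousOn
  obtain ⟨u, hum, hu⟩ := isCompact_Icc.exists_isMaxOn (Set.nonempty_Icc.2 hAb.le) hcont
  obtain ⟨v, hvm, hv⟩ := isCompact_Icc.exists_isMinOn (Set.nonempty_Icc.2 hAb.le) hcont
  have hu' : ∀ w ∈ Set.Icc A b, p.eval w ≤ p.eval u := fun w hw => hu hw
  have hv' : ∀ w ∈ Set.Icc A b, p.eval v ≤ p.eval w := fun w hw => hv hw
  set D := p.eval u - p.eval v with hD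
  have hD0 : 0 ≤ D := sub_nonneg.2 ((hv' u hum).trans (le_refl _))
  have hDpos : 0 < D := by
    rcases hD0.lt_or_eq with h | h
    · exact h
    · exfalso
      have hvu : p.eval v = p.eval u := by linarith [hD ▸ h.symm]
      have hconst : ∀ w ∈ Set.Icc A b, p.eval w = p.eval u := fun w hw =>
        le_antisymm (hu' w hw) (hvu ▸ hv' w hw)
      have hroots : {w : ℝ | (p - Polynomial.C (p.eval u)).IsRoot w}.Infinite := by
        apply Set.Infinite.mono ?_ (Set.Icc_infinite hAb)
        intro w hw
        simp [Polynomial.IsRoot, hconst w hw]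
      have h0 := Polynomial.eq_zero_of_infinite_isRoot _ hroots
      have hp : p = Polynomial.C (p.eval u) := by
        have := sub_eq_zero.mp h0; exact this
      rw [hp, Polynomial.natDegree_C] at hd
      omega
  set c := (A + b)/2 with hc
  set r := (b - A)/2 with hrdef
  have hr : 0 < r := by rw [hrdef]; linarith
  set m := (p.eval u + p.eval v)/2 with hm
  set q : Polynomial ℝ :=
    Polynomial.C (2/D) * (p.comp (Polynomial.C c - Polynomial.C r * Polynomial.X)
      - Polynomial.C m) with hq
  have hqe : ∀ w : ℝ, q.eval w = (2/D) * (p.eval (c - r*w) - m) := by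
    intro w
    simp [hq, Polynomial.eval_comp]
  have hca : c - r = A := by rw [hc, hrdef]; ring
  have hcb : c + r = b := by rw [hc, hrdef]; ring
  have hq1 : ∀ w ∈ Set.Icc (-1:ℝ) 1, |q.eval w| ≤ 1 := by
    intro w hw
    have hmem : c - r*w ∈ Set.Icc A b := by
      constructor
      · nlinarith [hw.2]
      · nlinarith [hw.1]
    have h1 := hu' _ hmem
    have h2 := hv' _ hmem
    have habs : |p.eval (c - r*w) - m| ≤ D/2 := by
      rw [abs_le]
      constructor
      · linarith [h1, h2, hm, hD]
      · linarith [h1, h2, hm, hD]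
    rw [hqe w, abs_mul, abs_of_pos (show (0:ℝ) < 2/D by positivity)]
    calc (2/D) * |p.eval (c - r*w) - m| ≤ (2/D) * (D/2) := by
          exact mul_le_mul_of_nonneg_left habs (by positivity)
      _ = 1 := by field_simp
  have hqdeg : q.natDegree ≤ d := by
    have hs : (Polynomial.C c - Polynomial.C r * Polynomial.X : Polynomial ℝ).natDegree = 1 := by
      have he : (Polynomial.C c - Polynomial.C r * Polynomial.X : Polynomial ℝ)
          = Polynomial.C (-r) * Polynomial.X + Polynomial.C c := by
        simp [map_neg]; ring
      rw [he, Polynomial.natDegree_linear (neg_ne_zero.2 hr.ne')]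
    rw [hq]
    refine Polynomial.natDegree_mul_le.trans ?_
    rw [Polynomial.natDegree_C, zero_add]
    refine (Polynomial.natDegree_sub_le _ _).trans ?_
    rw [Polynomial.natDegree_comp, hs, mul_one, hd, Polynomial.natDegree_C]
    simp
  have hkey : ∀ z ∈ Set.Icc a b, |p.eval z - m| ≤ D := by
    intro z hz
    rcases le_total z A with hzA | hzA
    · -- left part: use the growth lemma
      set x₀ := (c - z)/r with hx₀
      have hzx : c - r * x₀ = z := by
        rw [hx₀]; field_simp
        ring
      have h1 : 1 ≤ x₀ := by
        rw [hx₀, le_div_iff₀ hr]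
        linarith [hca]
      have h2 : x₀ ≤ 1 + 1/(18*(d:ℝ)^2) := by
        have h18 : (0:ℝ) < 18*(d:ℝ)^2 := by positivity
        have hstep : ε * (b - a) ≤ (1/(18*(d:ℝ)^2)) * r := by
          rw [div_mul_eq_mul_div, one_mul, le_div_iff₀ h18]
          have hrval : r = (b - a - ε * (b-a))/2 := by rw [hrdef, hAdef]; ring
          rw [hrval]
          linarith [mul_nonneg (sub_nonneg.2 hεd) hB.le,
            mul_nonneg (sub_nonneg.2 hε100) hB.le]
        rw [hx₀, div_le_iff₀ hr]
        have hza : a ≤ z := hz.1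
        have hcarel : c - a = r + ε * (b - a) := by rw [hc, hrdef, hAdef]; ring
        linarith [hstep, hr]
      have hg := growth_lemma d hd1 q hqdeg hq1 x₀ h1
      have hT := T_at_bound d hd1 x₀ h1 h2
      have hq2 : |q.eval x₀| ≤ 2 := hg.trans hT
      have heq2 : p.eval z - m = (D/2) * q.eval x₀ := by
        rw [hqe x₀, hzx]
        field_simp
      rw [heq2, abs_mul, abs_of_pos (show (0:ℝ) < D/2 by positivity)]
      calc (D/2) * |q.eval x₀| ≤ (D/2) * 2 := by
            exact mul_le_mul_of_nonneg_left hq2 (by positivity)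
        _ = D := by ring
    · -- z ∈ [A, b]
      have hmem : z ∈ Set.Icc A b := ⟨hzA, hz.2⟩
      have h1 := hu' _ hmem
      have h2 := hv' _ hmem
      rw [abs_le]
      constructor
      · linarith [hm, hD]
      · linarith [hm, hD]
  have hxm := hkey x hx
  have hym := hkey y hy
  have hHD : H ≤ 2*D := by
    have htri : |p.eval x - p.eval y| ≤ |p.eval x - m| + |m - p.eval y| :=
      abs_sub_le _ _ _
    rw [abs_sub_comm m] at htri
    linarith
  refine ⟨u, hum, v, hvm, ?_⟩
  rw [show p.eval u - p.eval v = D from hD.symm, abs_of_nonneg hD0]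
  linarith
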